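/- A triple (K, P, τ) ∈ 𝔻^T is a fixed point of Ψ^T if and only if P is a fixed point of the forward-backward equation P = [Ψ̄^T_P(t_l, P(t_{(l+1)∧ℓ}), Ψ^T_τ((Ψ^T_K(t_k, P(t_k)))_{k=0}^ℓ))]_{l=0}^ℓ with K = (Ψ^T_K(t_l, P(t_l)))_{l=0}^ℓ and τ = Ψ^T_τ((Ψ^T_K(t_l, P(t_l)))_{l=0}^ℓ). -/

import Mathlib

open MeasureTheory

namespace Paper

open Classical in
/-- real-valued indicator of a proposition -/
noncomputable def indR (p : Prop) : ℝ := if p then 1 else 0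

open Classical in
/-- boolean indicator of a proposition -/
noncomputable def indB (p : Prop) : Bool := if p then true else false

/-- The atom of the σ-algebra `m` containing the point `ω`:
the intersection of all `m`-measurable sets containing `ω`. -/
def atomOf {Ω : Type*} (m : MeasurableSpace Ω) (ω : Ω) : Set Ω :=
  ⋂₀ {s : Set Ω | MeasurableSet[m] s ∧ ω ∈ s}

/-- The set `S`, with the order induced from the ambient preorder, is a nonempty complete
lattice: it has a greatest and a least element and every subset of `S` has a least upper
bound and a greatest lower bound within `S`. -/
def LatticeStructure {X : Type*} [Preorder X] (S : Set X) : Prop :=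
  S.Nonempty ∧
  (∃ top ∈ S, ∀ z ∈ S, z ≤ top) ∧
  (∃ bot ∈ S, ∀ z ∈ S, bot ≤ z) ∧
  (∀ A ⊆ S,
    (∃ u ∈ S, (∀ a ∈ A, a ≤ u) ∧ ∀ w ∈ S, (∀ a ∈ A, a ≤ w) → u ≤ w) ∧
    (∃ v ∈ S, (∀ a ∈ A, v ≤ a) ∧ ∀ w ∈ S, (∀ a ∈ A, w ≤ a) → w ≤ v))

/-- The space of triples `(K, P, τ)`: capital process, survival-probability process,
default-time vector, with the componentwise (pointwise) order. -/
abbrev Tri (Ω : Type*) (n ℓ : ℕ) :=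
  (Fin (ℓ+1) → Ω → Fin n → ℝ) × (Fin (ℓ+1) → Ω → Fin n → ℝ) × (Fin n → Ω → ℝ)

/-- Data of the single-maturity interbank model. -/
structure SM (Ω : Type*) (n ℓ : ℕ) where
  /-- maturity -/
  T : ℝ
  /-- times `0 = t 0 < t 1 < ... < t ℓ = T` -/
  t : Fin (ℓ+1) → ℝ
  /-- external asset process -/
  x : Fin (ℓ+1) → Ω → Fin n → ℝ
  /-- interbank liabilities -/
  L : Fin n → Fin n → ℝ
  /-- external liabilities -/
  L0 : Fin n → ℝ
  /-- recovery rate -/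
  β : ℝ
  /-- risk-free rate -/
  r : ℝ

namespace SM

variable {Ω : Type*} {n ℓ : ℕ}

/-- total liabilities `p̄_i` -/
noncomputable def pbar (M : SM Ω n ℓ) (i : Fin n) : ℝ := (∑ j, M.L i j) + M.L0 i

/-- discount factor `e^{-r (T - t l)}` -/
noncomputable def disc (M : SM Ω n ℓ) (l : Fin (ℓ+1)) : ℝ :=
  Real.exp (-(M.r * (M.T - M.t l)))

/-- the capital component `Ψ^T_K` of the clearing map -/
noncomputable def ΨK (M : SM Ω n ℓ) (l : Fin (ℓ+1)) (Pt : Ω → Fin n → ℝ)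
    (ω : Ω) (i : Fin n) : ℝ :=
  M.x l ω i + M.disc l * (∑ j, M.L j i * (M.β + (1 - M.β) * Pt ω j))
    - M.disc l * M.pbar i

/-- the default-time component `Ψ^T_τ` of the clearing map: the first time `t l` at which
the capital of bank `i` is negative, and `T + 1` if the capital stays nonnegative -/
noncomputable def Ψτ (M : SM Ω n ℓ) (K : Fin (ℓ+1) → Ω → Fin n → ℝ)
    (i : Fin n) (ω : Ω) : ℝ :=
  sInf (insert (M.T + 1) ((fun l => M.t l) '' {l : Fin (ℓ+1) | K l ω i < 0}))

/-- the survival-probability component `Ψ^T_P` of the clearing map: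
`ℙ(τ_i > T | 𝓕 l)` -/
noncomputable def ΨP [MeasurableSpace Ω] (M : SM Ω n ℓ)
    (𝓕 : Fin (ℓ+1) → MeasurableSpace Ω) (μ : Measure Ω)
    (τ : Fin n → Ω → ℝ) (l : Fin (ℓ+1)) (ω : Ω) (i : Fin n) : ℝ :=
  (μ[fun ω' => indR (M.T < τ i ω') | 𝓕 l]) ω

/-- membership in the domain `𝔻^T`: adaptedness, the balance-sheet bounds on `K`,
`P` valued in `[0,1]`, and `τ` valued in `{t_0, ..., t_ℓ, T+1}` -/
def memD [MeasurableSpace Ω] (M : SM Ω n ℓ) (𝓕 : Fin (ℓ+1) → MeasurableSpace Ω)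
    (K P : Fin (ℓ+1) → Ω → Fin n → ℝ) (τ : Fin n → Ω → ℝ) : Prop :=
  (∀ l i, Measurable[𝓕 l] fun ω => K l ω i) ∧
  (∀ l i, Measurable[𝓕 l] fun ω => P l ω i) ∧
  (∀ l ω i, M.x l ω i - M.disc l * M.pbar i ≤ K l ω i) ∧
  (∀ l ω i, K l ω i ≤ M.x l ω i + M.disc l * ((∑ j, M.L j i) - M.pbar i)) ∧
  (∀ l ω i, 0 ≤ P l ω i ∧ P l ω i ≤ 1) ∧
  (∀ i ω, (∃ l, τ i ω = M.t l) ∨ τ i ω = M.T + 1)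

/-- the clearing map `Ψ^T` -/
noncomputable def Ψmap [MeasurableSpace Ω] (M : SM Ω n ℓ)
    (𝓕 : Fin (ℓ+1) → MeasurableSpace Ω) (μ : Measure Ω) (z : Tri Ω n ℓ) : Tri Ω n ℓ :=
  (fun l ω i => M.ΨK l (z.2.1 l) ω i,
   fun l ω i => M.ΨP 𝓕 μ z.2.2 l ω i,
   fun i ω => M.Ψτ z.1 i ω)

/-- the set of clearing solutions: fixed points of `Ψ^T` in `𝔻^T` -/
def clearingSet [MeasurableSpace Ω] (M : SM Ω n ℓ)
    (𝓕 : Fin (ℓ+1) → MeasurableSpace Ω) (μ : Measure Ω) : Set (Tri Ω n ℓ) :=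
  {z | M.memD 𝓕 z.1 z.2.1 z.2.2 ∧ M.Ψmap 𝓕 μ z = z}

/-- Standing assumptions of the single-maturity model. -/
structure Valid [MeasurableSpace Ω] (M : SM Ω n ℓ)
    (𝓕 : Fin (ℓ+1) → MeasurableSpace Ω) (μ : Measure Ω) : Prop where
  hn : 1 ≤ n
  hTop : (inferInstance : MeasurableSpace Ω) = ⊤
  hprob : IsProbabilityMeasure μ
  hpos : ∀ ω : Ω, 0 < μ {ω}
  hmono : Monotone 𝓕
  h0 : 𝓕 0 = ⊥
  hlast : 𝓕 (Fin.last ℓ) = (inferInstance : MeasurableSpace Ω)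
  ht : StrictMono M.t
  ht0 : M.t 0 = 0
  htT : M.t (Fin.last ℓ) = M.T
  hx : ∀ l i, Measurable[𝓕 l] fun ω => M.x l ω i
  hx0 : ∀ l ω i, 0 ≤ M.x l ω i
  hL : ∀ i j, 0 ≤ M.L i j
  hLd : ∀ i, M.L i i = 0
  hL0 : ∀ i, 0 ≤ M.L0 i
  hβ0 : 0 ≤ M.β
  hβ1 : M.β ≤ 1
  hr : 0 ≤ M.r

end SM

/-- index `(l+1) ∧ ℓ` -/
def nextIdx {ℓ : ℕ} (l : Fin (ℓ+1)) : Fin (ℓ+1) := ⟨min (l.val + 1) ℓ, by omega⟩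

namespace SM

open Classical in
/-- the backward-recursion survival component `Ψ̄^T_P`: at the terminal time it is the
indicator `1{τ_i > T}`; before the terminal time it is the conditional average, over the
current atom of `𝓕 l`, of the next-period survival probabilities `Pnext` (the sum over
successor atoms `Σ ℙ(ω_{l+1}) P_i(t_{l+1}, ω_{l+1}) / ℙ(ω_l)`, written as a sum over points
of the atom, to which it is identical for `𝓕 (l+1)`-measurable `Pnext`). -/
noncomputable def Ψbar_P [MeasurableSpace Ω] [Fintype Ω] (M : SM Ω n ℓ)
    (𝓕 : Fin (ℓ+1) → MeasurableSpace Ω) (μ : MeasureTheory.Measure Ω)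
    (Pnext : Ω → Fin n → ℝ) (τ : Fin n → Ω → ℝ)
    (l : Fin (ℓ+1)) (ω : Ω) (i : Fin n) : ℝ :=
  if l = Fin.last ℓ then indR (M.T < τ i ω)
  else
    (∑ ω' ∈ Finset.univ.filter (fun ω' => ω' ∈ atomOf (𝓕 l) ω),
        (μ {ω'}).toReal * Pnext ω' i) / (μ (atomOf (𝓕 l) ω)).toReal

/-- the recursive clearing map `Ψ̄^T`: same as `Ψ^T` in the `K` and `τ` components, with the
`P` component replaced by the backward recursion `Ψ̄^T_P` -/
noncomputable def Ψbar [MeasurableSpace Ω] [Fintype Ω] (M : SM Ω n ℓ)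
    (𝓕 : Fin (ℓ+1) → MeasurableSpace Ω) (μ : MeasureTheory.Measure Ω)
    (z : Tri Ω n ℓ) : Tri Ω n ℓ :=
  (fun l ω i => M.ΨK l (z.2.1 l) ω i,
   fun l ω i => M.Ψbar_P 𝓕 μ (z.2.1 (nextIdx l)) z.2.2 l ω i,
   fun i ω => M.Ψτ z.1 i ω)

end SM

section Aux
variable {Ω : Type*}

lemma mem_atomOf (m : MeasurableSpace Ω) (ω : Ω) : ω ∈ atomOf m ω :=
  fun _ hs => hs.2

lemma atomOf_subset {m : MeasurableSpace Ω} {s : Set Ω} (hs : MeasurableSet[m] s)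
    {ω : Ω} (hω : ω ∈ s) : atomOf m ω ⊆ s :=
  Set.sInter_subset_of_mem ⟨hs, hω⟩

lemma mem_atomOf_symm {m : MeasurableSpace Ω} {ω ω' : Ω} (h : ω' ∈ atomOf m ω) :
    ω ∈ atomOf m ω' := by
  rintro s ⟨hs, hω's⟩
  by_contra hωs
  exact (atomOf_subset hs.compl hωs h) hω's

lemma atomOf_eq_of_mem {m : MeasurableSpace Ω} {ω ω' : Ω} (h : ω' ∈ atomOf m ω) :
    atomOf m ω' = atomOf m ω := by
  apply Set.Subset.antisymm
  · exact Set.subset_sInter fun s hs => atomOf_subset hs.1 (atomOf_subset hs.1 hs.2 h)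
  · exact Set.subset_sInter fun s hs =>
      atomOf_subset hs.1 (atomOf_subset hs.1 hs.2 (mem_atomOf_symm h))

variable [Fintype Ω]

lemma measurableSet_atomOf (m : MeasurableSpace Ω) (ω : Ω) :
    MeasurableSet[m] (atomOf m ω) :=
  MeasurableSet.sInter (Set.to_countable _) fun _ hs => hs.1

lemma measurable_of_constOn {m : MeasurableSpace Ω} {g : Ω → ℝ}
    (hg : ∀ ω ω', ω' ∈ atomOf m ω → g ω' = g ω) : Measurable[m] g := by
  intro B _
  have h : g ⁻¹' B = ⋃ ω ∈ {ω | g ω ∈ B}, atomOf m ω := by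
    ext ω'
    simp only [Set.mem_preimage, Set.mem_iUnion, Set.mem_setOf_eq]
    constructor
    · exact fun h => ⟨ω', h, mem_atomOf m ω'⟩
    · rintro ⟨ω, hω, hmem⟩; rw [hg ω ω' hmem]; exact hω
  rw [h]
  exact MeasurableSet.biUnion (Set.to_countable _) fun ω _ => measurableSet_atomOf m ω

open Classical in
lemma measure_toReal_eq_sum [MeasurableSpace Ω]
    (hTop : (inferInstance : MeasurableSpace Ω) = ⊤)
    (μ : Measure Ω) [IsFiniteMeasure μ] (A : Set Ω) :
    (μ A).toReal = ∑ x ∈ Finset.univ.filter (· ∈ A), (μ {x}).toReal := by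
  have h1 : μ A = ∑ x ∈ Finset.univ.filter (· ∈ A), μ {x} := by
    have hA : A = ⋃ x ∈ (Finset.univ.filter (· ∈ A) : Finset Ω), ({x} : Set Ω) := by
      ext y; simp
    conv_lhs => rw [hA]
    exact measure_biUnion_finset
      (fun x _ y _ hxy => by simp [Function.onFun, Set.disjoint_singleton, hxy])
      (fun x _ => by
        show MeasurableSet[(inferInstance : MeasurableSpace Ω)] _
        rw [hTop]; trivial)
  rw [h1, ENNReal.toReal_sum fun x _ => measure_ne_top μ _]

omit [Fintype Ω] in
lemma eq_of_ae_eq' [MeasurableSpace Ω] {μ : Measure Ω} (hpos : ∀ ω : Ω, 0 < μ {ω})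
    {f g : Ω → ℝ} (h : f =ᵐ[μ] g) : f = g := by
  funext ω
  by_contra hne
  have h' : ∀ᵐ x ∂μ, f x = g x := h
  have h0 : μ {x | ¬ f x = g x} = 0 := by rwa [MeasureTheory.ae_iff] at h'
  have hle : μ {ω} ≤ μ {x | ¬ f x = g x} :=
    measure_mono fun x hx => by rw [Set.mem_singleton_iff] at hx; subst hx; exact hne
  exact absurd (le_antisymm (h0 ▸ hle) (zero_le)) (hpos ω).ne'

omit [Fintype Ω] in
lemma measurableSet_all [MeasurableSpace Ω]
    (hTop : (inferInstance : MeasurableSpace Ω) = ⊤) (s : Set Ω) :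
    MeasurableSet s :=
  (MeasurableSpace.le_def.mp hTop.ge) s MeasurableSpace.measurableSet_top

open Classical in
lemma sum_avg_eq (m : MeasurableSpace Ω) [MeasurableSpace Ω]
    (hTop : (inferInstance : MeasurableSpace Ω) = ⊤)
    (μ : Measure Ω) [IsProbabilityMeasure μ] (hpos : ∀ ω : Ω, 0 < μ {ω})
    {s : Set Ω} (hs : MeasurableSet[m] s) (f : Ω → ℝ) :
    ∑ x ∈ Finset.univ.filter (· ∈ s), (μ {x}).toReal *
      ((∑ y ∈ Finset.univ.filter (fun y => y ∈ atomOf m x), (μ {y}).toReal * f y)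
        / (μ (atomOf m x)).toReal)
    = ∑ x ∈ Finset.univ.filter (· ∈ s), (μ {x}).toReal * f x := by
  have ha_pos : ∀ x : Ω, 0 < (μ (atomOf m x)).toReal := fun x =>
    ENNReal.toReal_pos
      (((hpos x).trans_le
        (measure_mono (Set.singleton_subset_iff.2 (mem_atomOf m x)))).ne')
      (measure_ne_top μ _)
  have step1 : ∀ x : Ω, (μ {x}).toReal *
      ((∑ y ∈ Finset.univ.filter (fun y => y ∈ atomOf m x), (μ {y}).toReal * f y)
        / (μ (atomOf m x)).toReal)
      = ∑ y ∈ Finset.univ, (if y ∈ atomOf m x then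
          (μ {x}).toReal * ((μ {y}).toReal * f y) / (μ (atomOf m x)).toReal else 0) := by
    intro x
    rw [Finset.sum_div, Finset.mul_sum, Finset.sum_filter]
    exact Finset.sum_congr rfl fun y _ => by split_ifs <;> ring
  rw [Finset.sum_congr rfl fun x _ => step1 x, Finset.sum_comm]
  have inner : ∀ y : Ω,
      (∑ x ∈ Finset.univ.filter (· ∈ s),
        (if y ∈ atomOf m x then
          (μ {x}).toReal * ((μ {y}).toReal * f y) / (μ (atomOf m x)).toReal else 0))
      = (if y ∈ s then (μ {y}).toReal * f y else 0) := by
    intro y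
    have hswap : ∀ x : Ω, (if y ∈ atomOf m x then
          (μ {x}).toReal * ((μ {y}).toReal * f y) / (μ (atomOf m x)).toReal else 0)
        = (if x ∈ atomOf m y then
            ((μ {y}).toReal * f y / (μ (atomOf m y)).toReal) * (μ {x}).toReal else 0) := by
      intro x
      by_cases hxy : y ∈ atomOf m x
      · have hx' : x ∈ atomOf m y := mem_atomOf_symm hxy
        have haxy : atomOf m x = atomOf m y := atomOf_eq_of_mem hx'
        rw [if_pos hxy, if_pos hx', haxy]; ring
      · rw [if_neg hxy, if_neg fun h => hxy (mem_atomOf_symm h)]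
    simp only [hswap]
    rw [← Finset.sum_filter, ← Finset.mul_sum, Finset.filter_filter]
    by_cases hy : y ∈ s
    · have hfe : Finset.univ.filter (fun x => x ∈ s ∧ x ∈ atomOf m y)
          = Finset.univ.filter (· ∈ atomOf m y) := by
        ext x
        simp only [Finset.mem_filter, Finset.mem_univ, true_and, and_iff_right_iff_imp]
        exact fun hx => atomOf_subset hs hy hx
      rw [if_pos hy, hfe, ← measure_toReal_eq_sum hTop μ (atomOf m y),
        div_mul_cancel₀ _ (ha_pos y).ne']
    · have hfe : Finset.univ.filter (fun x => x ∈ s ∧ x ∈ atomOf m y)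
          = ∅ := by
        ext x
        simp only [Finset.mem_filter, Finset.mem_univ, true_and, Finset.notMem_empty,
          iff_false, not_and]
        intro hxs hxa
        exact hy (atomOf_subset hs hxs ((atomOf_eq_of_mem hxa).symm ▸ mem_atomOf m y))
      rw [if_neg hy, hfe, Finset.sum_empty, mul_zero]
  rw [Finset.sum_congr rfl fun y _ => inner y, ← Finset.sum_filter]

open Classical in
lemma condexp_eq_atomAvg (m : MeasurableSpace Ω) [MeasurableSpace Ω]
    (hTop : (inferInstance : MeasurableSpace Ω) = ⊤)
    (μ : Measure Ω) [IsProbabilityMeasure μ] (hpos : ∀ ω : Ω, 0 < μ {ω})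
    (hm : m ≤ (inferInstance : MeasurableSpace Ω))
    (f : Ω → ℝ) (ω₀ : Ω) :
    (μ[f|m]) ω₀ = (∑ ω' ∈ Finset.univ.filter (fun ω' => ω' ∈ atomOf m ω₀),
        (μ {ω'}).toReal * f ω') / (μ (atomOf m ω₀)).toReal := by
  haveI : MeasurableSingletonClass Ω := ⟨fun a => measurableSet_all hTop _⟩
  have hconst : ∀ ω ω' : Ω, ω' ∈ atomOf m ω →
      (fun x => (∑ y ∈ Finset.univ.filter (fun y => y ∈ atomOf m x),
        (μ {y}).toReal * f y) / (μ (atomOf m x)).toReal) ω'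
      = (fun x => (∑ y ∈ Finset.univ.filter (fun y => y ∈ atomOf m x),
        (μ {y}).toReal * f y) / (μ (atomOf m x)).toReal) ω := by
    intro ω ω' h
    simp only [atomOf_eq_of_mem h]
  have hgm : Measurable[m] (fun x => (∑ y ∈ Finset.univ.filter (fun y => y ∈ atomOf m x),
      (μ {y}).toReal * f y) / (μ (atomOf m x)).toReal) := measurable_of_constOn hconst
  have key : ∀ s : Set Ω, MeasurableSet[m] s →
      ∫ x in s, ((∑ y ∈ Finset.univ.filter (fun y => y ∈ atomOf m x),
        (μ {y}).toReal * f y) / (μ (atomOf m x)).toReal) ∂μ = ∫ x in s, f x ∂μ := by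
    intro s hs
    have hs' : s = ↑(Finset.univ.filter (· ∈ s)) := by ext y; simp
    rw [hs', integral_finset _ (Integrable.of_finite.integrableOn),
      integral_finset _ (Integrable.of_finite.integrableOn)]
    simp only [smul_eq_mul]
    exact sum_avg_eq m hTop μ hpos hs f
  have hae : (fun x => (∑ y ∈ Finset.univ.filter (fun y => y ∈ atomOf m x),
      (μ {y}).toReal * f y) / (μ (atomOf m x)).toReal) =ᵐ[μ] μ[f|m] := by
    refine ae_eq_condExp_of_forall_setIntegral_eq hm Integrable.of_finite
      (fun s _ _ => Integrable.of_finite.integrableOn)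
      (fun s hs _ => key s hs) ?_
    exact ⟨_, (Measurable.stronglyMeasurable hgm), Filter.EventuallyEq.rfl⟩
  have heq := eq_of_ae_eq' hpos hae
  exact (congrFun heq ω₀).symm

end Aux

open SM in
/-- Corollary 2.9: a triple `(K, P, τ) ∈ 𝔻^T` is a fixed point of `Ψ^T`
if and only if `P` is a fixed point of the forward-backward equation, where the capital is
computed forward from `P` via `Ψ^T_K`, the default times are `Ψ^T_τ` of that capital, and
the survival probabilities are recovered backward via `Ψ̄^T_P`. -/
theorem clearing_iff_forward_backward
    {Ω : Type*} [Fintype Ω] [MeasurableSpace Ω] {n ℓ : ℕ}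
    (M : SM Ω n ℓ) (𝓕 : Fin (ℓ+1) → MeasurableSpace Ω) (μ : MeasureTheory.Measure Ω)
    (hM : M.Valid 𝓕 μ)
    (z : Tri Ω n ℓ) (hz : M.memD 𝓕 z.1 z.2.1 z.2.2) :
    M.Ψmap 𝓕 μ z = z ↔
      ((z.2.1 = fun l ω i =>
          M.Ψbar_P 𝓕 μ (z.2.1 (nextIdx l))
            (fun i' ω' => M.Ψτ (fun k ω'' i'' => M.ΨK k (z.2.1 k) ω'' i'') i' ω') l ω i) ∧
        z.1 = (fun l ω i => M.ΨK l (z.2.1 l) ω i) ∧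
        z.2.2 = fun i ω => M.Ψτ (fun k ω' i' => M.ΨK k (z.2.1 k) ω' i') i ω) := by
  classical
  obtain ⟨K, P, τ⟩ := z
  haveI := hM.hprob
  haveI : MeasurableSingletonClass Ω := ⟨fun _ => measurableSet_all hM.hTop _⟩
  have hmle : ∀ l, 𝓕 l ≤ (inferInstance : MeasurableSpace Ω) := fun l =>
    le_top.trans hM.hTop.ge
  have hlenext : ∀ l : Fin (ℓ+1), l ≤ nextIdx l := fun l => by
    rw [Fin.le_def]
    have := l.isLt
    simp only [nextIdx]
    omega
  have hcondLast : ∀ g : Ω → ℝ, μ[g|𝓕 (Fin.last ℓ)] = g := fun g =>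
    condExp_of_stronglyMeasurable (hmle _)
      ((show Measurable[𝓕 (Fin.last ℓ)] g by
        rw [hM.hlast]
        exact fun _ _ => measurableSet_all hM.hTop _).stronglyMeasurable)
      Integrable.of_finite
  have htower : ∀ (g : Ω → ℝ) (l : Fin (ℓ+1)),
      μ[μ[g|𝓕 (nextIdx l)]|𝓕 l] = μ[g|𝓕 l] := fun g l =>
    eq_of_ae_eq' hM.hpos (condExp_condExp_of_le (hM.hmono (hlenext l)) (hmle _))
  have hAvg : ∀ (g : Ω → ℝ) (l : Fin (ℓ+1)) (ω : Ω),
      (∑ ω' ∈ Finset.univ.filter (fun ω' => ω' ∈ atomOf (𝓕 l) ω),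
        (μ {ω'}).toReal * g ω') / (μ (atomOf (𝓕 l) ω)).toReal = (μ[g|𝓕 l]) ω :=
    fun g l ω => (condexp_eq_atomAvg (𝓕 l) hM.hTop μ hM.hpos (hmle l) g ω).symm
  constructor
  · intro h
    have h1 : (fun l ω i => M.ΨK l (P l) ω i) = K := congrArg Prod.fst h
    have h2' : (fun l ω i => M.ΨP 𝓕 μ τ l ω i) = P := congrArg (fun w => w.2.1) h
    have h3 : (fun i ω => M.Ψτ K i ω) = τ := congrArg (fun w => w.2.2) h
    have h2 : ∀ l ω i, P l ω i = (μ[fun ω' => indR (M.T < τ i ω')|𝓕 l]) ω :=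
      fun l ω i => (congrFun (congrFun (congrFun h2' l) ω) i).symm
    refine ⟨?_, h1.symm, by rw [h1]; exact h3.symm⟩
    rw [h1, h3]
    funext l ω i
    by_cases hl : l = Fin.last ℓ
    · subst hl
      simp only [SM.Ψbar_P, if_pos rfl, if_true]
      rw [h2 (Fin.last ℓ) ω i, hcondLast]
    · simp only [SM.Ψbar_P, if_neg hl]
      rw [show (∑ ω' ∈ Finset.univ.filter (fun ω' => ω' ∈ atomOf (𝓕 l) ω),
            (μ {ω'}).toReal * P (nextIdx l) ω' i)
          = ∑ ω' ∈ Finset.univ.filter (fun ω' => ω' ∈ atomOf (𝓕 l) ω),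
            (μ {ω'}).toReal *
              (μ[fun ω'' => indR (M.T < τ i ω'')|𝓕 (nextIdx l)]) ω' from
          Finset.sum_congr rfl fun ω' _ => by rw [h2 (nextIdx l) ω' i]]
      rw [hAvg (μ[fun ω'' => indR (M.T < τ i ω'')|𝓕 (nextIdx l)]) l ω,
        htower (fun ω'' => indR (M.T < τ i ω'')) l]
      exact h2 l ω i
  · rintro ⟨hPfb, hK, hτ⟩
    rw [← hK] at hτ
    rw [← hK, ← hτ] at hPfb
    have hPfb' : ∀ l ω i, P l ω i = M.Ψbar_P 𝓕 μ (P (nextIdx l)) τ l ω i :=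
      fun l ω i => congrFun (congrFun (congrFun hPfb l) ω) i
    have key : ∀ (d : ℕ) (l : Fin (ℓ+1)), ℓ - l.val = d →
        ∀ ω i, P l ω i = (μ[fun ω' => indR (M.T < τ i ω')|𝓕 l]) ω := by
      intro d
      induction d with
      | zero =>
        intro l hl ω i
        have hlast : l = Fin.last ℓ := by
          have := l.isLt
          apply Fin.ext
          simp only [Fin.val_last]
          omega
        subst hlast
        rw [hPfb' (Fin.last ℓ) ω i]
        simp only [SM.Ψbar_P, if_pos rfl, if_true]
        rw [hcondLast]
      | succ d ih =>
        intro l hl ω i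
        have hne : l ≠ Fin.last ℓ := by
          intro hcon
          rw [hcon] at hl
          simp only [Fin.val_last] at hl
          omega
        have hnextval : ℓ - (nextIdx l).val = d := by
          have := l.isLt
          simp only [nextIdx]
          omega
        rw [hPfb' l ω i]
        simp only [SM.Ψbar_P, if_neg hne]
        rw [show (∑ ω' ∈ Finset.univ.filter (fun ω' => ω' ∈ atomOf (𝓕 l) ω),
              (μ {ω'}).toReal * P (nextIdx l) ω' i)
            = ∑ ω' ∈ Finset.univ.filter (fun ω' => ω' ∈ atomOf (𝓕 l) ω),
              (μ {ω'}).toReal *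
                (μ[fun ω'' => indR (M.T < τ i ω'')|𝓕 (nextIdx l)]) ω' from
            Finset.sum_congr rfl fun ω' _ => by rw [ih (nextIdx l) hnextval ω' i]]
        rw [hAvg (μ[fun ω'' => indR (M.T < τ i ω'')|𝓕 (nextIdx l)]) l ω,
          htower (fun ω'' => indR (M.T < τ i ω'')) l]
    refine Prod.ext ?_ (Prod.ext ?_ ?_)
    · show (fun l ω i => M.ΨK l (P l) ω i) = K
      exact hK.symm
    · show (fun l ω i => M.ΨP 𝓕 μ τ l ω i) = P
      funext l ω i
      exact (key (ℓ - l.val) l rfl ω i).symm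
    · show (fun i ω => M.Ψτ K i ω) = τ
      exact hτ.symm

end Paper
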